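/- Let A be a complex unital Banach algebra with unit e and let a, b, c ∈ A be such that a has a Moore-Penrose inverse a†, a = bc, b⁻¹(0) = 0, and cA = A; let b† and c† denote the Moore-Penrose inverses of b and c. Then the following statements are equivalent: (i) a is EP; (ii) bb† = c†c; (iii) (b†)⁻¹(0) = c⁻¹(0); (iv) bA = c†A; (v) b₋₁(0) = (c†)₋₁(0); (vi) Ac = Ab†. -/

import Mathlib

noncomputable section

/-- An element `h` of a complex normed algebra is *hermitian* if `‖exp (i t h)‖ = 1`
for all real `t`. -/
def IsHermitianElem {A : Type*} [NormedRing A] [NormedAlgebra ℂ A] (h : A) : Prop :=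
  ∀ t : ℝ, ‖NormedSpace.exp ((Complex.I * (t : ℂ)) • h)‖ = 1

/-- `x` is a Moore–Penrose inverse of `a`: `axa = a`, `xax = x`, and `ax`, `xa` are hermitian. -/
def IsMPInv {A : Type*} [NormedRing A] [NormedAlgebra ℂ A] (a x : A) : Prop :=
  a * x * a = a ∧ x * a * x = x ∧ IsHermitianElem (a * x) ∧ IsHermitianElem (x * a)

section Aux

variable {A : Type*} [NormedRing A] [NormedAlgebra ℂ A] [CompleteSpace A]

open scoped Nat

/-- Exponential of a scalar multiple of an idempotent. -/
lemma exp_smul_idem (z : ℂ) {p : A} (hp : p * p = p) :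
    NormedSpace.exp (z • p) = 1 + (Complex.exp z - 1) • p := by
  have hpow : ∀ n : ℕ, (z • p) ^ (n + 1) = z ^ (n + 1) • p := by
    intro n
    induction n with
    | zero => simp
    | succ k ih => rw [pow_succ, ih, smul_mul_smul_comm, hp, ← pow_succ]
  have hsum : Summable fun n : ℕ => ((n ! : ℂ))⁻¹ • (z • p) ^ n :=
    NormedSpace.expSeries_summable' (z • p)
  have hsumz : Summable fun n : ℕ => ((n ! : ℂ))⁻¹ • z ^ n :=
    NormedSpace.expSeries_summable' z
  have hsumz' : Summable fun n : ℕ => (((n + 1)! : ℂ))⁻¹ * z ^ (n + 1) := by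
    have := (summable_nat_add_iff 1).mpr hsumz
    simpa [smul_eq_mul] using this
  have hz : Complex.exp z = 1 + ∑' n : ℕ, (((n + 1)! : ℂ))⁻¹ * z ^ (n + 1) := by
    have h1 : Complex.exp z = ∑' n : ℕ, ((n ! : ℂ))⁻¹ • z ^ n := by
      rw [Complex.exp_eq_exp_ℂ, NormedSpace.exp_eq_tsum (𝕂 := ℂ)]
    rw [h1, Summable.tsum_eq_zero_add hsumz]
    simp [smul_eq_mul]
  calc NormedSpace.exp (z • p)
      = ∑' n : ℕ, ((n ! : ℂ))⁻¹ • (z • p) ^ n := by rw [NormedSpace.exp_eq_tsum (𝕂 := ℂ)]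
    _ = ((0! : ℂ))⁻¹ • (z • p) ^ 0 + ∑' n : ℕ, (((n + 1)! : ℂ))⁻¹ • (z • p) ^ (n + 1) :=
        Summable.tsum_eq_zero_add hsum
    _ = 1 + ∑' n : ℕ, ((((n + 1)! : ℂ))⁻¹ * z ^ (n + 1)) • p := by
        rw [tsum_congr fun n => by rw [hpow, smul_smul]]
        simp
    _ = 1 + (∑' n : ℕ, (((n + 1)! : ℂ))⁻¹ * z ^ (n + 1)) • p := by
        rw [Summable.tsum_smul_const hsumz']
    _ = 1 + (Complex.exp z - 1) • p := by
        congr 1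
        rw [hz, add_sub_cancel_left]
  
lemma norm_one_sub_two_smul {p : A} (hp : p * p = p) (hh : IsHermitianElem p) :
    ‖(1 : A) - (2 : ℂ) • p‖ = 1 := by
  have h := hh Real.pi
  rw [exp_smul_idem _ hp, mul_comm Complex.I _, Complex.exp_pi_mul_I] at h
  have e : (-1 - 1 : ℂ) = -2 := by norm_num
  rw [e, neg_smul, ← sub_eq_add_neg] at h
  exact h

lemma sq_zero_of_norm_one_add {x : A} (hx : x * x = 0) (hn : ‖(1 : A) + x‖ ≤ 1) : x = 0 := by
  have key : ∀ n : ℕ, ((1 : A) + x) ^ n = 1 + (n : ℂ) • x := by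
    intro n
    induction n with
    | zero => simp
    | succ k ih =>
      rw [pow_succ, ih, add_mul, one_mul, mul_add, mul_one, smul_mul_assoc, hx, smul_zero,
        add_zero]
      push_cast
      rw [add_smul, one_smul]
      abel
  have bound : ∀ n : ℕ, (n : ℝ) * ‖x‖ ≤ 1 + ‖(1 : A)‖ := by
    intro n
    cases n with
    | zero => simp; positivity
    | succ k =>
      have h1 : ‖((1 : A) + x) ^ (k + 1)‖ ≤ 1 := by
        calc ‖((1 : A) + x) ^ (k + 1)‖ ≤ ‖(1 : A) + x‖ ^ (k + 1) :=
              norm_pow_le' _ (Nat.succ_pos k)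
          _ ≤ 1 := pow_le_one₀ (norm_nonneg _) hn
      have h2 : ‖(((k + 1 : ℕ) : ℂ)) • x‖ ≤ ‖((1 : A) + x) ^ (k + 1)‖ + ‖(1 : A)‖ := by
        rw [key]
        calc ‖(((k + 1 : ℕ) : ℂ)) • x‖ = ‖(1 + (((k + 1 : ℕ) : ℂ)) • x) - 1‖ := by
              rw [add_sub_cancel_left]
          _ ≤ ‖(1 : A) + (((k + 1 : ℕ) : ℂ)) • x‖ + ‖(1 : A)‖ := norm_sub_le _ _
      rw [norm_smul, Complex.norm_natCast] at h2
      calc ((k + 1 : ℕ) : ℝ) * ‖x‖ ≤ ‖((1 : A) + x) ^ (k + 1)‖ + ‖(1 : A)‖ := h2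
        _ ≤ 1 + ‖(1 : A)‖ := by linarith
  have hx0 : ‖x‖ = 0 := by
    by_contra h
    have hpos : 0 < ‖x‖ := lt_of_le_of_ne (norm_nonneg x) (Ne.symm h)
    obtain ⟨n, hn'⟩ := exists_nat_gt ((1 + ‖(1 : A)‖) / ‖x‖)
    rw [div_lt_iff₀ hpos] at hn'
    have := bound n
    linarith
  exact norm_eq_zero.mp hx0

/-- Two hermitian idempotents generating the same one-sided structures are equal. -/
lemma herm_idem_eq {p q : A} (hpi : p * p = p) (hqi : q * q = q)
    (hph : IsHermitianElem p) (hqh : IsHermitianElem q)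
    (hor : (p * q = q ∧ q * p = p) ∨ (p * q = p ∧ q * p = q)) : p = q := by
  have n1 := norm_one_sub_two_smul hpi hph
  have n2 := norm_one_sub_two_smul hqi hqh
  have hu : ‖((1 : A) - (2 : ℂ) • p) * ((1 : A) - (2 : ℂ) • q)‖ ≤ 1 := by
    calc ‖((1 : A) - (2 : ℂ) • p) * ((1 : A) - (2 : ℂ) • q)‖
        ≤ ‖(1 : A) - (2 : ℂ) • p‖ * ‖(1 : A) - (2 : ℂ) • q‖ := norm_mul_le _ _
      _ = 1 := by rw [n1, n2, one_mul]
  have half : ∀ y : A, (2 : ℂ) • y = 0 → y = 0 := by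
    intro y hy
    have := congrArg (fun z => (2 : ℂ)⁻¹ • z) hy
    simpa [smul_smul] using this
  rcases hor with ⟨h1, h2⟩ | ⟨h1, h2⟩
  · have hqp : (q - p) * (q - p) = 0 := by
      rw [sub_mul, mul_sub, mul_sub, hqi, hpi, h1, h2]
      abel
    have hux : ((1 : A) - (2 : ℂ) • p) * ((1 : A) - (2 : ℂ) • q) = 1 + (2 : ℂ) • (q - p) := by
      rw [sub_mul, mul_sub, mul_sub, smul_mul_smul_comm, h1]
      simp only [one_mul, mul_one]
      module
    have hx2 : ((2 : ℂ) • (q - p)) * ((2 : ℂ) • (q - p)) = 0 := by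
      rw [smul_mul_smul_comm, hqp, smul_zero]
    have := sq_zero_of_norm_one_add hx2 (hux ▸ hu)
    have := half _ this
    rw [sub_eq_zero] at this
    exact this.symm
  · have hpq : (p - q) * (p - q) = 0 := by
      rw [sub_mul, mul_sub, mul_sub, hqi, hpi, h1, h2]
      abel
    have hux : ((1 : A) - (2 : ℂ) • p) * ((1 : A) - (2 : ℂ) • q) = 1 + (2 : ℂ) • (p - q) := by
      rw [sub_mul, mul_sub, mul_sub, smul_mul_smul_comm, h1]
      simp only [one_mul, mul_one]
      module
    have hx2 : ((2 : ℂ) • (p - q)) * ((2 : ℂ) • (p - q)) = 0 := by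
      rw [smul_mul_smul_comm, hpq, smul_zero]
    have := sq_zero_of_norm_one_add hx2 (hux ▸ hu)
    have := half _ this
    rw [sub_eq_zero] at this
    exact this

end Aux

/-- If `a = bc` with `b⁻¹(0) = 0`, `cA = A` and Moore–Penrose inverses `a†`, `b†`, `c†`:
`a` is EP iff `bb† = c†c` iff `(b†)⁻¹(0) = c⁻¹(0)` iff `bA = c†A` iff
`b₋₁(0) = (c†)₋₁(0)` iff `Ac = Ab†`. -/
theorem ep_tfae_of_factorization {A : Type*} [NormedRing A] [NormedAlgebra ℂ A] [CompleteSpace A]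
    (a b c ad bd cd : A) (had : IsMPInv a ad) (hbd : IsMPInv b bd) (hcd : IsMPInv c cd)
    (habc : a = b * c)
    (hb : {x : A | b * x = 0} = {0}) (hc : {y : A | ∃ x, y = c * x} = Set.univ) :
    List.TFAE
      [a * ad = ad * a,
       b * bd = cd * c,
       {x : A | bd * x = 0} = {x : A | c * x = 0},
       {y : A | ∃ x, y = b * x} = {y : A | ∃ x, y = cd * x},
       {x : A | x * b = 0} = {x : A | x * cd = 0},
       {y : A | ∃ x, y = x * c} = {y : A | ∃ x, y = x * bd}] := by
  -- basic consequences of the hypotheses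
  have hbki : ∀ x : A, b * x = 0 → x = 0 := by
    intro x hx
    have := Set.ext_iff.mp hb x
    simpa using this.mp hx
  have hcs : ∀ y : A, ∃ x, y = c * x := by
    intro y
    have := Set.ext_iff.mp hc y
    simpa using this.mpr trivial
  have hbb : bd * b = 1 := by
    have h0 : b * (bd * b - 1) = 0 := by
      rw [mul_sub, mul_one, ← mul_assoc, hbd.1, sub_self]
    have := hbki _ h0
    rwa [sub_eq_zero] at this
  have hccd : c * cd = 1 := by
    obtain ⟨x₀, hx₀⟩ := hcs 1
    calc c * cd = c * cd * 1 := (mul_one _).symm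
      _ = c * cd * (c * x₀) := by rw [← hx₀]
      _ = c * cd * c * x₀ := by rw [mul_assoc (c*cd) c x₀]
      _ = c * x₀ := by rw [hcd.1]
      _ = 1 := hx₀.symm
  have hbda : bd * a = c := by rw [habc, ← mul_assoc, hbb, one_mul]
  have hacd : a * cd = b := by rw [habc, mul_assoc, hccd, mul_one]
  have hab : a * ad * b = b := by
    calc a * ad * b = a * ad * (a * cd) := by rw [hacd]
      _ = a * ad * a * cd := by rw [← mul_assoc]
      _ = b := by rw [had.1, hacd]
  have hba : b * bd * a = a := by rw [mul_assoc, hbda, ← habc]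
  -- idempotents
  have idP : (a * ad) * (a * ad) = a * ad := by rw [← mul_assoc, had.1]
  have idQ : (ad * a) * (ad * a) = ad * a := by rw [← mul_assoc, had.2.1]
  have idE1 : (b * bd) * (b * bd) = b * bd := by rw [← mul_assoc, hbd.1]
  have idE2 : (cd * c) * (cd * c) = cd * c := by rw [← mul_assoc, hcd.2.1]
  -- `a ad = b bd` and `ad a = cd c`
  have hE1 : a * ad = b * bd := by
    refine herm_idem_eq idP idE1 had.2.2.1 hbd.2.2.1 (Or.inl ⟨?_, ?_⟩)
    · rw [← mul_assoc, hab]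
    · rw [← mul_assoc, hba]
  have hE2 : ad * a = cd * c := by
    refine herm_idem_eq idQ idE2 had.2.2.2 hcd.2.2.2 (Or.inr ⟨?_, ?_⟩)
    · calc (ad * a) * (cd * c) = ad * a * cd * c := by rw [← mul_assoc]
        _ = ad * (a * cd) * c := by rw [mul_assoc ad a cd]
        _ = ad * b * c := by rw [hacd]
        _ = ad * (b * c) := by rw [mul_assoc]
        _ = ad * a := by rw [← habc]
    · calc (cd * c) * (ad * a) = (cd * (bd * a)) * (ad * a) := by rw [hbda]
        _ = cd * bd * a * ad * a := by simp only [← mul_assoc]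
        _ = cd * bd * a := by rw [mul_assoc (cd*bd) a ad, mul_assoc (cd*bd) (a*ad) a, had.1]
        _ = cd * (bd * a) := by rw [mul_assoc]
        _ = cd * c := by rw [hbda]
  tfae_have 1 ↔ 2 := by rw [hE1, hE2]
  tfae_have 2 → 3 := by
    intro h
    ext x
    simp only [Set.mem_setOf_eq]
    constructor
    · intro hx
      have e : (c * b) * (bd * x) = c * x := by
        calc (c * b) * (bd * x) = c * ((b * bd) * x) := by simp only [mul_assoc]
          _ = c * ((cd * c) * x) := by rw [h]
          _ = (c * cd) * (c * x) := by simp only [mul_assoc]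
          _ = c * x := by rw [hccd, one_mul]
      rw [← e, hx, mul_zero]
    · intro hx
      have e : (bd * cd) * (c * x) = bd * x := by
        calc (bd * cd) * (c * x) = bd * ((cd * c) * x) := by simp only [mul_assoc]
          _ = bd * ((b * bd) * x) := by rw [h]
          _ = (bd * b) * (bd * x) := by simp only [mul_assoc]
          _ = bd * x := by rw [hbb, one_mul]
      rw [← e, hx, mul_zero]
  tfae_have 3 → 2 := by
    intro h
    have hmem := Set.ext_iff.mp h
    have k1 : c * ((1 : A) - b * bd) = 0 := by
      apply (hmem _).mp
      show bd * ((1 : A) - b * bd) = 0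
      rw [mul_sub, mul_one, ← mul_assoc, hbd.2.1, sub_self]
    have k1' : c * (b * bd) = c := by
      rw [mul_sub, mul_one, sub_eq_zero] at k1
      exact k1.symm
    have k2 : bd * ((1 : A) - cd * c) = 0 := by
      apply (hmem _).mpr
      show c * ((1 : A) - cd * c) = 0
      rw [mul_sub, mul_one, ← mul_assoc, hcd.1, sub_self]
    have k2' : bd * (cd * c) = bd := by
      rw [mul_sub, mul_one, sub_eq_zero] at k2
      exact k2.symm
    refine herm_idem_eq idE1 idE2 hbd.2.2.1 hcd.2.2.2 (Or.inr ⟨?_, ?_⟩)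
    · rw [mul_assoc b bd (cd * c), k2']
    · rw [mul_assoc cd c (b * bd), k1']
  tfae_have 2 → 4 := by
    intro h
    ext y
    simp only [Set.mem_setOf_eq]
    constructor
    · rintro ⟨x, rfl⟩
      refine ⟨c * (b * x), ?_⟩
      calc b * x = ((b * bd) * b) * x := by rw [hbd.1]
        _ = ((cd * c) * b) * x := by rw [h]
        _ = cd * (c * (b * x)) := by simp only [mul_assoc]
    · rintro ⟨x, rfl⟩
      refine ⟨bd * (cd * x), ?_⟩
      calc cd * x = ((cd * c) * cd) * x := by rw [hcd.2.1]
        _ = ((b * bd) * cd) * x := by rw [← h]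
        _ = b * (bd * (cd * x)) := by simp only [mul_assoc]
  tfae_have 4 → 2 := by
    intro h
    have hmem := Set.ext_iff.mp h
    obtain ⟨x₀, hb0⟩ : ∃ x, b = cd * x := (hmem b).mp ⟨1, (mul_one b).symm⟩
    obtain ⟨x₁, hc0⟩ : ∃ x, cd = b * x := (hmem cd).mpr ⟨1, (mul_one cd).symm⟩
    have k1 : (cd * c) * b = b := by
      rw [hb0]
      calc (cd * c) * (cd * x₀) = cd * ((c * cd) * x₀) := by simp only [mul_assoc]
        _ = cd * x₀ := by rw [hccd, one_mul]
    have k2 : (b * bd) * cd = cd := by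
      rw [hc0]
      calc (b * bd) * (b * x₁) = b * ((bd * b) * x₁) := by simp only [mul_assoc]
        _ = b * x₁ := by rw [hbb, one_mul]
    refine herm_idem_eq idE1 idE2 hbd.2.2.1 hcd.2.2.2 (Or.inl ⟨?_, ?_⟩)
    · rw [← mul_assoc, k2]
    · rw [← mul_assoc, k1]
  tfae_have 2 → 5 := by
    intro h
    ext x
    simp only [Set.mem_setOf_eq]
    constructor
    · intro hx
      calc x * cd = x * ((cd * c) * cd) := by rw [hcd.2.1]
        _ = x * ((b * bd) * cd) := by rw [h]
        _ = (x * b) * (bd * cd) := by simp only [mul_assoc]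
        _ = 0 := by rw [hx, zero_mul]
    · intro hx
      calc x * b = x * ((b * bd) * b) := by rw [hbd.1]
        _ = x * ((cd * c) * b) := by rw [h]
        _ = (x * cd) * (c * b) := by simp only [mul_assoc]
        _ = 0 := by rw [hx, zero_mul]
  tfae_have 5 → 2 := by
    intro h
    have hmem := Set.ext_iff.mp h
    have k1 : ((1 : A) - b * bd) * cd = 0 := by
      apply (hmem _).mp
      show ((1 : A) - b * bd) * b = 0
      rw [sub_mul, one_mul, hbd.1, sub_self]
    have k1' : (b * bd) * cd = cd := by
      rw [sub_mul, one_mul, sub_eq_zero] at k1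
      exact k1.symm
    have k2 : ((1 : A) - cd * c) * b = 0 := by
      apply (hmem _).mpr
      show ((1 : A) - cd * c) * cd = 0
      rw [sub_mul, one_mul, hcd.2.1, sub_self]
    have k2' : (cd * c) * b = b := by
      rw [sub_mul, one_mul, sub_eq_zero] at k2
      exact k2.symm
    refine herm_idem_eq idE1 idE2 hbd.2.2.1 hcd.2.2.2 (Or.inl ⟨?_, ?_⟩)
    · rw [← mul_assoc, k1']
    · rw [← mul_assoc, k2']
  tfae_have 2 → 6 := by
    intro h
    ext y
    simp only [Set.mem_setOf_eq]
    constructor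
    · rintro ⟨x, rfl⟩
      refine ⟨(x * c) * b, ?_⟩
      calc x * c = x * ((c * cd) * c) := by rw [hccd, one_mul]
        _ = (x * c) * (cd * c) := by simp only [mul_assoc]
        _ = (x * c) * (b * bd) := by rw [h]
        _ = ((x * c) * b) * bd := by simp only [mul_assoc]
    · rintro ⟨x, rfl⟩
      refine ⟨(x * bd) * cd, ?_⟩
      calc x * bd = x * ((bd * b) * bd) := by rw [hbb, one_mul]
        _ = (x * bd) * (b * bd) := by simp only [mul_assoc]
        _ = (x * bd) * (cd * c) := by rw [h]
        _ = ((x * bd) * cd) * c := by simp only [mul_assoc]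
  tfae_have 6 → 2 := by
    intro h
    have hmem := Set.ext_iff.mp h
    obtain ⟨x₀, h0⟩ : ∃ x, c = x * bd := (hmem c).mp ⟨1, (one_mul c).symm⟩
    obtain ⟨x₁, h1⟩ : ∃ x, bd = x * c := (hmem bd).mpr ⟨1, (one_mul bd).symm⟩
    have k1 : c * (b * bd) = c := by
      rw [h0]
      calc (x₀ * bd) * (b * bd) = x₀ * ((bd * b) * bd) := by simp only [mul_assoc]
        _ = x₀ * bd := by rw [hbb, one_mul]
    have k2 : bd * (cd * c) = bd := by
      rw [h1]
      calc (x₁ * c) * (cd * c) = x₁ * ((c * cd) * c) := by simp only [mul_assoc]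
        _ = x₁ * c := by rw [hccd, one_mul]
    refine herm_idem_eq idE1 idE2 hbd.2.2.1 hcd.2.2.2 (Or.inr ⟨?_, ?_⟩)
    · rw [mul_assoc b bd (cd * c), k2]
    · rw [mul_assoc cd c (b * bd), k1]
  tfae_finish
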